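/- Conversely, any f that computes a list of all computable functions computes a function dominating every computable function; hence dom(REC) = list(REC). -/

import Mathlib

open Filter

namespace Paper

/-- Codes for oracle Turing machines (relativized partial recursive functions). -/
inductive OCode : Type
  | oracle : OCode
  | zero : OCode
  | succ : OCode
  | left : OCode
  | right : OCode
  | pair : OCode → OCode → OCode
  | comp : OCode → OCode → OCode
  | prec : OCode → OCode → OCode
  | rfind' : OCode → OCode

/-- Evaluation of an oracle code relative to an oracle `O`. -/
def evalo (O : ℕ →. ℕ) : OCode → ℕ →. ℕ
  | .oracle => O
  | .zero => fun _ => Part.some 0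
  | .succ => fun n => Part.some (n + 1)
  | .left => fun n => Part.some n.unpair.1
  | .right => fun n => Part.some n.unpair.2
  | .pair cf cg => fun n => Nat.pair <$> evalo O cf n <*> evalo O cg n
  | .comp cf cg => fun n => evalo O cg n >>= evalo O cf
  | .prec cf cg => Nat.unpaired fun a n =>
      n.rec (evalo O cf a) fun y IH => do
        let i ← IH
        evalo O cg (Nat.pair a (Nat.pair y i))
  | .rfind' cf => Nat.unpaired fun a m =>
      (Nat.rfind fun n => (fun x => x = 0) <$> evalo O cf (Nat.pair a (n + m))).map (· + m)

/-- Turing reducibility for total functions. -/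
def TRed (f g : ℕ → ℕ) : Prop := ∃ c : OCode, evalo (g : ℕ →. ℕ) c = (f : ℕ →. ℕ)

/-- `g` is a uniform modulus of computation for `f`. -/
def UniformModulus (g f : ℕ → ℕ) : Prop :=
  ∃ c : OCode, ∀ h : ℕ → ℕ, (∀ i, g i ≤ h i) → evalo (h : ℕ →. ℕ) c = (f : ℕ →. ℕ)


open Nat.Partrec (Code)

def codeToO : Code → OCode
  | Code.zero => .zero
  | Code.succ => .succ
  | Code.left => .left
  | Code.right => .right
  | Code.pair a b => .pair (codeToO a) (codeToO b)
  | Code.comp a b => .comp (codeToO a) (codeToO b)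
  | Code.prec a b => .prec (codeToO a) (codeToO b)
  | Code.rfind' a => .rfind' (codeToO a)

theorem evalo_codeToO (O : ℕ →. ℕ) : ∀ c, evalo O (codeToO c) = c.eval := by
  intro c
  induction c <;>
    first
      | rfl
      | (funext n; rfl)
      | (simp [codeToO, evalo, Nat.Partrec.Code.eval, *] <;> rfl)

/-- Oracle-computability of a total function from a total oracle. -/
def OComp (O f : ℕ → ℕ) : Prop := ∃ c : OCode, evalo (O : ℕ →. ℕ) c = (f : ℕ →. ℕ)

theorem OComp.of_computable {O f : ℕ → ℕ} (h : Computable f) : OComp O f := by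
  obtain ⟨c, hc⟩ := Nat.Partrec.Code.exists_code.1 (Partrec.nat_iff.1 h)
  exact ⟨codeToO c, by rw [evalo_codeToO, hc]⟩

theorem OComp.oracle {O : ℕ → ℕ} : OComp O O := ⟨.oracle, rfl⟩

theorem OComp.tred {O f : ℕ → ℕ} (h : TRed f O) : OComp O f := h

theorem OComp.comp {O f g : ℕ → ℕ} (hf : OComp O f) (hg : OComp O g) :
    OComp O (fun n => f (g n)) := by
  obtain ⟨cf, hcf⟩ := hf; obtain ⟨cg, hcg⟩ := hg
  refine ⟨.comp cf cg, funext fun n => ?_⟩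
  simp [evalo, hcf, hcg]
  exact Part.bind_some _ _

theorem OComp.pair {O f g : ℕ → ℕ} (hf : OComp O f) (hg : OComp O g) :
    OComp O (fun n => Nat.pair (f n) (g n)) := by
  obtain ⟨cf, hcf⟩ := hf; obtain ⟨cg, hcg⟩ := hg
  refine ⟨.pair cf cg, funext fun n => ?_⟩
  simp [evalo, hcf, hcg, Seq.seq]

theorem OComp.prec {O f g : ℕ → ℕ} (hf : OComp O f) (hg : OComp O g) :
    OComp O (Nat.unpaired fun a n =>
      n.rec (f a) fun y IH => g (Nat.pair a (Nat.pair y IH))) := by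
  obtain ⟨cf, hcf⟩ := hf; obtain ⟨cg, hcg⟩ := hg
  refine ⟨.prec cf cg, funext fun n => ?_⟩
  simp only [evalo, Nat.unpaired, PFun.coe_val]
  induction n.unpair.2 with
  | zero => simpa using congrFun hcf n.unpair.1
  | succ y ih =>
      simp only [ih]
      simpa using congrFun hcg _

end Paper

namespace Paper

theorem OComp.of_eq {O f g : ℕ → ℕ} (h : OComp O f) (H : ∀ n, f n = g n) : OComp O g := by
  have : f = g := funext H
  rwa [this] at h

theorem comp_unpair1 : Computable fun n : ℕ => n.unpair.1 :=
  (Primrec.fst.comp Primrec.unpair).to_comp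

theorem comp_unpair2 : Computable fun n : ℕ => n.unpair.2 :=
  (Primrec.snd.comp Primrec.unpair).to_comp

theorem comp_max2 : Computable fun n : ℕ => max n.unpair.1 n.unpair.2 :=
  (Primrec.nat_max.comp (Primrec.fst.comp Primrec.unpair)
    (Primrec.snd.comp Primrec.unpair)).to_comp

theorem list_to_dom {f x : ℕ → ℕ} (hx : TRed x f)
    (hlist : ∀ g : ℕ → ℕ, Computable g → ∃ n, ∀ k, x (Nat.pair n k) = g k) :
    ∃ d : ℕ → ℕ, TRed d f ∧ ∀ g, Computable g → ∀ᶠ i in atTop, g i ≤ d i := by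
  set F : ℕ → ℕ := Nat.unpaired fun a n =>
    n.rec 0 fun y IH => max (x (Nat.pair y a)) IH with hFdef
  have hg0 : OComp f fun p : ℕ =>
      max (x (Nat.pair p.unpair.2.unpair.1 p.unpair.1)) p.unpair.2.unpair.2 := by
    have h1 : OComp f fun p : ℕ => x (Nat.pair p.unpair.2.unpair.1 p.unpair.1) :=
      OComp.comp (OComp.tred hx)
        (OComp.of_computable
          ((Primrec₂.natPair.comp
            (Primrec.fst.comp (Primrec.unpair.comp (Primrec.snd.comp Primrec.unpair)))
            (Primrec.fst.comp Primrec.unpair)).to_comp))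
    have h2 : OComp f fun p : ℕ => p.unpair.2.unpair.2 :=
      OComp.of_computable
        ((Primrec.snd.comp (Primrec.unpair.comp (Primrec.snd.comp Primrec.unpair))).to_comp)
    exact (OComp.comp (OComp.of_computable comp_max2) (OComp.pair h1 h2)).of_eq
      (fun p => by simp)
  have hF : OComp f F := by
    have := OComp.prec (O := f)
      (OComp.of_computable (Computable.const 0)) hg0
    refine this.of_eq fun n => ?_
    simp [hFdef, Nat.unpaired]
  have hd : OComp f fun i => F (Nat.pair i (i + 1)) :=
    OComp.comp hF
      (OComp.of_computable ((Primrec₂.natPair.comp Primrec.id Primrec.succ).to_comp))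
  refine ⟨fun i => F (Nat.pair i (i + 1)), hd, fun g hg => ?_⟩
  obtain ⟨n, hn⟩ := hlist g hg
  have key : ∀ (a m y : ℕ), y < m →
      x (Nat.pair y a) ≤ (Nat.rec 0 (fun y IH => max (x (Nat.pair y a)) IH) m : ℕ) := by
    intro a m
    induction m with
    | zero => intro y hy; omega
    | succ m ih =>
        intro y hy
        rcases Nat.lt_succ_iff_lt_or_eq.1 hy with h | h
        · exact le_trans (ih y h) (le_max_right _ _)
        · subst h; exact le_max_left _ _
  rw [Filter.eventually_atTop]
  refine ⟨n, fun i hi => ?_⟩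
  rw [← hn i]
  show x (Nat.pair n i) ≤ F (Nat.pair i (i + 1))
  have : F (Nat.pair i (i + 1)) =
      (Nat.rec 0 (fun y IH => max (x (Nat.pair y i)) IH) (i + 1) : ℕ) := by
    simp [hFdef, Nat.unpaired]
  rw [this]
  exact key i (i + 1) n (Nat.lt_succ_of_le hi)

end Paper

namespace Paper

open Nat.Partrec (Code)
open Nat.Partrec.Code (evaln evaln_sound evaln_mono evaln_complete exists_code eval)

/-- step-bounded evaluation packaged as a single ℕ → ℕ function using oracle `d`. -/
def qF (d : ℕ → ℕ) : ℕ → ℕ := fun n =>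
  Encodable.encode (evaln (d n.unpair.2 + n.unpair.1.unpair.2 + 1)
    (Denumerable.ofNat Code n.unpair.1.unpair.1) n.unpair.2)

def BF (d : ℕ → ℕ) : ℕ → ℕ := Nat.unpaired fun m k =>
  k.rec (min 1 (qF d (Nat.pair m 0))) fun y IH => IH * min 1 (qF d (Nat.pair m (y + 1)))

def xF (d : ℕ → ℕ) : ℕ → ℕ := fun n => BF d n * (qF d n - 1)

theorem qF_pair (d : ℕ → ℕ) (m k : ℕ) :
    qF d (Nat.pair m k) =
      Encodable.encode (evaln (d k + m.unpair.2 + 1) (Denumerable.ofNat Code m.unpair.1) k) := by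
  simp [qF]

theorem BF_pair (d : ℕ → ℕ) (m k : ℕ) :
    BF d (Nat.pair m k) = if ∀ j ≤ k, qF d (Nat.pair m j) ≠ 0 then 1 else 0 := by
  induction k with
  | zero =>
      have e : BF d (Nat.pair m 0) = min 1 (qF d (Nat.pair m 0)) := by simp [BF]
      rw [e]
      by_cases h : qF d (Nat.pair m 0) ≠ 0
      · rw [if_pos (by intro j hj; interval_cases j; exact h)]; omega
      · rw [if_neg (by push_neg; exact ⟨0, le_rfl, by omega⟩)]; omega
  | succ k ih =>
      have e : BF d (Nat.pair m (k + 1)) =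
          BF d (Nat.pair m k) * min 1 (qF d (Nat.pair m (k + 1))) := by simp [BF]
      rw [e, ih]
      by_cases hA : ∀ j ≤ k, qF d (Nat.pair m j) ≠ 0
      · by_cases hB : qF d (Nat.pair m (k + 1)) ≠ 0
        · rw [if_pos hA, if_pos (by
            intro j hj
            rcases eq_or_lt_of_le hj with rfl | h
            · exact hB
            · exact hA j (Nat.lt_succ_iff.mp h))]
          omega
        · rw [if_pos hA, if_neg (by push_neg at hB ⊢; exact ⟨k + 1, le_rfl, hB⟩)]
          omega
      · rw [if_neg hA, if_neg (by
          push_neg at hA ⊢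
          obtain ⟨j, hj, hj0⟩ := hA
          exact ⟨j, le_trans hj (Nat.le_succ _), hj0⟩)]
        omega

theorem xF_pair (d : ℕ → ℕ) (m k : ℕ) :
    xF d (Nat.pair m k) =
      if ∀ j ≤ k, qF d (Nat.pair m j) ≠ 0 then qF d (Nat.pair m k) - 1 else 0 := by
  rw [xF, BF_pair]
  split_ifs <;> omega

theorem comp_finite (v : ℕ → ℕ) : ∀ k0 : ℕ, Computable fun k : ℕ => if k < k0 then v k else 0
  | 0 => (Computable.const 0).of_eq (by simp)
  | (k0 + 1) => by
      have ih := comp_finite v k0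
      have hc : Computable fun k : ℕ => decide (k = k0) :=
        (Primrec.eq.comp Primrec.id (Primrec.const k0)).decide.to_comp
      refine (Computable.cond hc (Computable.const (v k0)) ih).of_eq fun k => ?_
      by_cases h : k = k0
      · subst h; simp
      · simp only [h, decide_false, Bool.cond_decide, if_neg h, cond_false]
        split_ifs <;> first | rfl | omega

theorem xF_ocomp {f d : ℕ → ℕ} (hd : OComp f d) : OComp f (xF d) := by
  classical
  have u1 : Primrec fun n : ℕ => n.unpair.1 := Primrec.fst.comp Primrec.unpair
  have u2 : Primrec fun n : ℕ => n.unpair.2 := Primrec.snd.comp Primrec.unpair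
  -- qF is f-computable
  have hR : OComp f fun n => Nat.pair (d n.unpair.2) n :=
    OComp.pair (hd.comp (OComp.of_computable comp_unpair2))
      (OComp.of_computable Computable.id)
  have hQ : Computable fun m : ℕ =>
      Encodable.encode (evaln (m.unpair.1 + m.unpair.2.unpair.1.unpair.2 + 1)
        (Denumerable.ofNat Code m.unpair.2.unpair.1.unpair.1) m.unpair.2.unpair.2) := by
    have hsteps : Primrec fun m : ℕ => m.unpair.1 + m.unpair.2.unpair.1.unpair.2 + 1 :=
      Primrec.nat_add.comp
        (Primrec.nat_add.comp u1 (u2.comp (u1.comp u2))) (Primrec.const 1)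
    have hcode : Primrec fun m : ℕ => Denumerable.ofNat Code m.unpair.2.unpair.1.unpair.1 :=
      (Primrec.ofNat Code).comp (u1.comp (u1.comp u2))
    have hinput : Primrec fun m : ℕ => m.unpair.2.unpair.2 := u2.comp u2
    exact (Primrec.encode.comp
      (Nat.Partrec.Code.primrec_evaln.comp ((hsteps.pair hcode).pair hinput))).to_comp
  have hq : OComp f (qF d) := by
    refine ((OComp.of_computable hQ).comp hR).of_eq fun n => ?_
    simp [qF]
  -- BF is f-computable
  have hmin1 : Computable fun t : ℕ => min 1 t :=
    (Primrec.nat_min.comp (Primrec.const 1) Primrec.id).to_comp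
  have hbase : OComp f fun m => min 1 (qF d (Nat.pair m 0)) :=
    ((OComp.of_computable hmin1).comp
      (hq.comp (OComp.of_computable
        ((Primrec₂.natPair.comp Primrec.id (Primrec.const 0)).to_comp)))).of_eq
      (fun m => rfl)
  have hstep : OComp f fun p : ℕ =>
      p.unpair.2.unpair.2 * min 1 (qF d (Nat.pair p.unpair.1 (p.unpair.2.unpair.1 + 1))) := by
    have hmul2 : Computable fun n : ℕ => n.unpair.1 * n.unpair.2 :=
      (Primrec.nat_mul.comp u1 u2).to_comp
    have h1 : OComp f fun p : ℕ => p.unpair.2.unpair.2 :=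
      OComp.of_computable ((u2.comp u2).to_comp)
    have h2 : OComp f fun p : ℕ =>
        min 1 (qF d (Nat.pair p.unpair.1 (p.unpair.2.unpair.1 + 1))) :=
      (OComp.of_computable hmin1).comp
        (hq.comp (OComp.of_computable
          ((Primrec₂.natPair.comp u1 (Primrec.succ.comp (u1.comp u2))).to_comp)))
    exact ((OComp.of_computable hmul2).comp (OComp.pair h1 h2)).of_eq fun p => by simp
  have hB : OComp f (BF d) := by
    refine (OComp.prec hbase hstep).of_eq fun n => ?_
    simp [BF, Nat.unpaired]
  have hmul2 : Computable fun n : ℕ => n.unpair.1 * n.unpair.2 :=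
    (Primrec.nat_mul.comp u1 u2).to_comp
  have hsub1 : Computable fun t : ℕ => t - 1 :=
    (Primrec.nat_sub.comp Primrec.id (Primrec.const 1)).to_comp
  exact ((OComp.of_computable hmul2).comp
    (OComp.pair hB ((OComp.of_computable hsub1).comp hq))).of_eq fun n => by simp [xF]

end Paper

namespace Paper

open Nat.Partrec (Code)
open Nat.Partrec.Code (evaln evaln_sound evaln_mono evaln_complete exists_code eval)

theorem dom_to_list {f d : ℕ → ℕ} (hd : TRed d f)
    (hdom : ∀ g : ℕ → ℕ, Computable g → ∀ᶠ i in atTop, g i ≤ d i) :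
    ∃ x : ℕ → ℕ, TRed x f ∧
      ∀ g : ℕ → ℕ, Computable g ↔ ∃ n, ∀ k, x (Nat.pair n k) = g k := by
  classical
  refine ⟨xF d, xF_ocomp (OComp.tred hd), fun g => ⟨fun hg => ?_, fun hg => ?_⟩⟩
  · -- computable g occurs as a column
    obtain ⟨cg, hcg⟩ := exists_code.1 (Partrec.nat_iff.1 hg)
    have htot : ∀ j : ℕ, ∃ t, (evaln t cg j).isSome := by
      intro j
      have : g j ∈ eval cg j := by rw [hcg]; exact Part.mem_some _
      obtain ⟨t, ht⟩ := evaln_complete.1 this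
      exact ⟨t, Option.isSome_iff_exists.2 ⟨_, ht⟩⟩
    set r : ℕ → ℕ := fun j => Nat.find (htot j) with hrdef
    have hr : Computable r := by
      have hp : Computable₂ fun (j t : ℕ) => (evaln t cg j).isSome :=
        (Primrec.option_isSome.comp
          (Nat.Partrec.Code.primrec_evaln.comp (((Primrec.snd).pair (Primrec.const cg)).pair Primrec.fst))).to_comp
      have hfind : Partrec fun j : ℕ =>
          Nat.rfind fun t => Part.some ((evaln t cg j).isSome) := by
        exact Partrec.rfind (Partrec.some.comp hp.to₂.partrec₂)
      refine hfind.of_eq_tot fun j => ?_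
      refine Nat.mem_rfind.2 ?_
      constructor
      · simpa using Nat.find_spec (htot j)
      · intro m hm
        simpa using Nat.find_min (htot j) hm
    obtain ⟨N, hN⟩ := Filter.eventually_atTop.1 (hdom r hr)
    set s : ℕ := (Finset.range N).sup r with hsdef
    have hrle : ∀ j, r j ≤ d j + s := by
      intro j
      rcases lt_or_ge j N with h | h
      · exact le_trans (Finset.le_sup (Finset.mem_range.2 h)) (by omega)
      · exact le_trans (hN j h) (by omega)
    set m : ℕ := Nat.pair (Encodable.encode cg) s with hmdef
    have hms : m.unpair.2 = s := by simp [hmdef]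
    have hmc : Denumerable.ofNat Code m.unpair.1 = cg := by
      simp [hmdef, Denumerable.ofNat_encode]
    have hsome : ∀ j, ∃ v, evaln (d j + s + 1) cg j = some v ∧ v = g j := by
      intro j
      obtain ⟨v, hv⟩ := Option.isSome_iff_exists.1 (Nat.find_spec (htot j))
      have hv2 : v ∈ evaln (d j + s + 1) cg j :=
        evaln_mono (by have h2 : Nat.find (htot j) ≤ d j + s := hrle j; omega) hv
      refine ⟨v, hv2, ?_⟩
      have : v ∈ eval cg j := evaln_sound hv2
      rw [hcg] at this
      exact (Part.mem_some_iff.1 this)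
    refine ⟨m, fun k => ?_⟩
    rw [xF_pair, if_pos]
    · obtain ⟨v, hv, hvg⟩ := hsome k
      rw [qF_pair, hms, hmc, hv, Encodable.encode_some]
      simp [hvg, Encodable.encode_nat]
    · intro j _
      obtain ⟨v, hv, _⟩ := hsome j
      rw [qF_pair, hms, hmc, hv, Encodable.encode_some]
      simp
  · -- every column is computable
    obtain ⟨m, hm⟩ := hg
    set c : Code := Denumerable.ofNat Code m.unpair.1 with hcdef
    by_cases hall : ∀ j, qF d (Nat.pair m j) ≠ 0
    · have hval : ∀ k, g k ∈ eval c k := by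
        intro k
        have hx := hm k
        rw [xF_pair, if_pos (fun j _ => hall j)] at hx
        have h0 := hall k
        rw [qF_pair] at hx h0
        rcases Option.eq_none_or_eq_some
            (evaln (d k + m.unpair.2 + 1) (Denumerable.ofNat Code m.unpair.1) k) with he | ⟨v, he⟩
        · rw [he] at h0; simp [Encodable.encode_none] at h0
        · rw [he, Encodable.encode_some] at hx
          have : g k = v := by simp [Encodable.encode_nat] at hx; omega
          rw [this, hcdef]
          exact evaln_sound he
      have : Nat.Partrec (g : ℕ →. ℕ) :=
        exists_code.2 ⟨c, funext fun k => (Part.eq_some_iff.2 (hval k))⟩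
      exact Partrec.nat_iff.2 this
    · push_neg at hall
      have hex : ∃ j, qF d (Nat.pair m j) = 0 := hall
      set k0 : ℕ := Nat.find hex with hk0def
      have hcol : ∀ k, g k = if k < k0 then qF d (Nat.pair m k) - 1 else 0 := by
        intro k
        rw [← hm k]
        rcases lt_or_ge k k0 with h | h
        · rw [if_pos h, xF_pair, if_pos]
          intro j hj
          exact Nat.find_min hex (lt_of_le_of_lt hj h)
        · rw [if_neg (not_lt.2 h), xF_pair, if_neg]
          push_neg
          exact ⟨k0, h, Nat.find_spec hex⟩
      exact (comp_finite (fun k => qF d (Nat.pair m k) - 1) k0).of_eq fun k => (hcol k).symm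

end Paper

theorem list_computes_dominating_and_dom_eq_list :
    (∀ f x : ℕ → ℕ, Paper.TRed x f →
      (∀ g : ℕ → ℕ, Computable g ↔ ∃ n, ∀ k, x (Nat.pair n k) = g k) →
      ∃ d : ℕ → ℕ, Paper.TRed d f ∧
        ∀ g : ℕ → ℕ, Computable g → ∀ᶠ i in Filter.atTop, g i ≤ d i) ∧
    {f : ℕ → ℕ | ∃ d : ℕ → ℕ, Paper.TRed d f ∧
        ∀ g : ℕ → ℕ, Computable g → ∀ᶠ i in Filter.atTop, g i ≤ d i} =
      {f : ℕ → ℕ | ∃ x : ℕ → ℕ, Paper.TRed x f ∧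
        ∀ g : ℕ → ℕ, Computable g ↔ ∃ n, ∀ k, x (Nat.pair n k) = g k} := by
  constructor
  · intro f x hx hlist
    exact Paper.list_to_dom hx fun g hg => (hlist g).1 hg
  · ext f
    constructor
    · rintro ⟨d, hd, hdom⟩
      exact Paper.dom_to_list hd hdom
    · rintro ⟨x, hx, hlist⟩
      exact Paper.list_to_dom hx fun g hg => (hlist g).1 hg
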